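/- For a binary string s of length n, the set of Parikh vectors of length-m substrings of s equals {(x, m-x) : pmin(m) ≤ x ≤ pmax(m)}, where pmin(m) and pmax(m) are respectively the minimum and maximum number of a's over all substrings of s of length m. Consequently, a query (x,y) with x+y = m occurs in s if and only if pmin(m) ≤ x ≤ pmax(m). -/

import Mathlib

lemma ivt_up (f : ℕ → ℕ) (hstep : ∀ k, f (k+1) ≤ f k + 1) :
    ∀ d a x, f a ≤ x → x ≤ f (a + d) → ∃ c ≤ d, f (a + c) = x := by
  intro d
  induction d with
  | zero =>
    intro a x h1 h2
    exact ⟨0, le_refl 0, by simp only [Nat.add_zero] at *; omega⟩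
  | succ d ih =>
    intro a x h1 h2
    by_cases h : x ≤ f (a + d)
    · obtain ⟨c, hc, hf⟩ := ih a x h1 h
      exact ⟨c, Nat.le_succ_of_le hc, hf⟩
    · push_neg at h
      refine ⟨d+1, le_refl _, ?_⟩
      have h3 := hstep (a + d)
      have e : a + (d+1) = (a+d)+1 := rfl
      rw [e] at h2 ⊢
      omega

lemma ivt_down (f : ℕ → ℕ) (hstep : ∀ k, f k ≤ f (k+1) + 1) :
    ∀ d a x, f (a + d) ≤ x → x ≤ f a → ∃ c ≤ d, f (a + c) = x := by
  intro d
  induction d with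
  | zero =>
    intro a x h1 h2
    exact ⟨0, le_refl 0, by simp only [Nat.add_zero] at *; omega⟩
  | succ d ih =>
    intro a x h1 h2
    by_cases h : x ≤ f (a + 1)
    · have e : a + (d+1) = (a+1)+d := by omega
      rw [e] at h1
      obtain ⟨c, hc, hf⟩ := ih (a+1) x h1 h
      exact ⟨c+1, by omega, by rw [show a + (c+1) = (a+1)+c by omega]; exact hf⟩
    · push_neg at h
      have h3 := hstep a
      exact ⟨0, Nat.zero_le _, by simp only [Nat.add_zero]; omega⟩

lemma count_take_mono (t : List Bool) (n : ℕ) :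
    (t.take n).count true ≤ (t.take (n+1)).count true ∧
    (t.take (n+1)).count true ≤ (t.take n).count true + 1 := by
  have e : t.take (n+1) = t.take n ++ (t.drop n).take 1 := by rw [List.take_add]
  rw [e, List.count_append]
  have h1 : ((t.drop n).take 1).count true ≤ 1 := by
    calc ((t.drop n).take 1).count true ≤ ((t.drop n).take 1).length := List.count_le_length
    _ ≤ 1 := by simp
  omega

lemma window_step (s : List Bool) (m : ℕ) (hm : 1 ≤ m) (i : ℕ) :
    ((s.drop (i+1)).take m).count true ≤ ((s.drop i).take m).count true + 1 ∧
    ((s.drop i).take m).count true ≤ ((s.drop (i+1)).take m).count true + 1 := by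
  by_cases hi : i < s.length
  · obtain ⟨k, rfl⟩ : ∃ k, m = k + 1 := ⟨m - 1, by omega⟩
    have e : s.drop i = s[i] :: s.drop (i+1) := List.drop_eq_getElem_cons hi
    rw [e]
    rw [List.take_succ_cons, List.count_cons]
    have h1 := count_take_mono (s.drop (i+1)) k
    rcases s[i] <;> simp <;> omega
  · have e1 : s.drop i = [] := List.drop_eq_nil_of_le (by omega)
    have e2 : s.drop (i+1) = [] := List.drop_eq_nil_of_le (by omega)
    rw [e1, e2]
    omega

lemma count_tf (l : List Bool) : l.count true + l.count false = l.length := by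
  induction l with
  | nil => simp
  | cons h t ih => rcases h <;> simp [List.count_cons] <;> omega



/-- The set of a-counts (`a` = `true`) of length-`m` windows of a binary string `s` is the
interval `[pmin(m), pmax(m)]`; consequently a Parikh vector `(x, y)` with `x + y = m`
occurs in `s` iff `pmin(m) ≤ x ≤ pmax(m)`. -/
theorem stmt2 (s : List Bool) (m : ℕ) (hm : 1 ≤ m) (hmn : m ≤ s.length) :
    (({x | ∃ i, i + m ≤ s.length ∧ ((s.drop i).take m).count true = x} : Set ℕ) =
      Set.Icc (sInf {x | ∃ i, i + m ≤ s.length ∧ ((s.drop i).take m).count true = x})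
        (sSup {x | ∃ i, i + m ≤ s.length ∧ ((s.drop i).take m).count true = x})) ∧
    ∀ x y : ℕ, x + y = m →
      ((∃ i, i + m ≤ s.length ∧ ((s.drop i).take m).count true = x ∧
          ((s.drop i).take m).count false = y) ↔
        sInf {x | ∃ i, i + m ≤ s.length ∧ ((s.drop i).take m).count true = x} ≤ x ∧
        x ≤ sSup {x | ∃ i, i + m ≤ s.length ∧ ((s.drop i).take m).count true = x}) := by
  set f : ℕ → ℕ := fun i => ((s.drop i).take m).count true with hf
  set S : Set ℕ := {x | ∃ i, i + m ≤ s.length ∧ ((s.drop i).take m).count true = x} with hS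
  have hSne : S.Nonempty := ⟨f 0, 0, by omega, rfl⟩
  have hbdd : BddAbove S := by
    refine ⟨m, fun x hx => ?_⟩
    obtain ⟨i, hi, rfl⟩ := hx
    calc ((s.drop i).take m).count true ≤ ((s.drop i).take m).length := List.count_le_length
    _ ≤ m := List.length_take_le _ _
  have hinf : sInf S ∈ S := Nat.sInf_mem hSne
  have hsup : sSup S ∈ S := Nat.sSup_mem hSne hbdd
  have key : S = Set.Icc (sInf S) (sSup S) := by
    apply Set.Subset.antisymm
    · intro x hx
      exact ⟨Nat.sInf_le hx, le_csSup hbdd hx⟩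
    · rintro x ⟨hx1, hx2⟩
      obtain ⟨i0, hi0, hfi0⟩ := hinf
      obtain ⟨i1, hi1, hfi1⟩ := hsup
      rcases le_or_gt i0 i1 with hle | hlt
      · obtain ⟨c, hc, hfc⟩ := ivt_up f (fun k => (window_step s m hm k).1)
          (i1 - i0) i0 x (by rw [hf]; simp only []; omega)
          (by rw [show i0 + (i1 - i0) = i1 by omega, hf]; simp only []; omega)
        exact ⟨i0 + c, by omega, hfc⟩
      · obtain ⟨c, hc, hfc⟩ := ivt_down f (fun k => (window_step s m hm k).2)
          (i0 - i1) i1 x (by rw [show i1 + (i0 - i1) = i0 by omega, hf]; simp only []; omega)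
          (by rw [hf]; simp only []; omega)
        exact ⟨i1 + c, by omega, hfc⟩
  refine ⟨key, fun x y hxy => ?_⟩
  constructor
  · rintro ⟨i, hi, hx, hy⟩
    have hxS : x ∈ S := ⟨i, hi, hx⟩
    exact ⟨Nat.sInf_le hxS, le_csSup hbdd hxS⟩
  · rintro ⟨h1, h2⟩
    have hxS : x ∈ S := by rw [key]; exact ⟨h1, h2⟩
    obtain ⟨i, hi, hx⟩ := hxS
    refine ⟨i, hi, hx, ?_⟩
    have hlen : ((s.drop i).take m).length = m := by
      rw [List.length_take, List.length_drop]; omega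
    have := count_tf ((s.drop i).take m)
    omega
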